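/- arXiv:2303.07841 — 6 statements merged into one kernel-verified Lean document; each statement's English description precedes it below -/
import Mathlib

section
/- For every density matrix ρ and all Hermitian n×n matrices H and V, the real number P = tr(iH[ρ,V]) satisfies the identity tr(iH[ρ,V]) = tr(i[H,√ρ]{√ρ,V}) and the Cauchy–Schwarz-type bound tr(iH[ρ,V]) ≤ √( (−tr([H,√ρ]²)) · tr({√ρ,V}²) ). (Key step in the proof of Theorem 1.) -/
open Matrix BigOperators
open scoped ComplexOrder InnerProductSpace

noncomputable section

/-- Commutator of two square matrices. -/
def mComm {d : Type*} [Fintype d] (A B : Matrix d d ℂ) : Matrix d d ℂ := A * B - B * A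

/-- Anticommutator of two square matrices. -/
def mAComm {d : Type*} [Fintype d] (A B : Matrix d d ℂ) : Matrix d d ℂ := A * B + B * A

lemma herm_trace_CS {d : Type*} [Fintype d] (X Y : Matrix d d ℂ)
    (hX : X.IsHermitian) (hY : Y.IsHermitian) :
    (Matrix.trace (X * Y)).re
      ≤ Real.sqrt ((Matrix.trace (X * X)).re * (Matrix.trace (Y * Y)).re) := by
  set x : EuclideanSpace ℂ (d × d) := WithLp.toLp 2 (fun p : d × d => X p.1 p.2) with hx
  set y : EuclideanSpace ℂ (d × d) := WithLp.toLp 2 (fun p : d × d => Y p.1 p.2) with hy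
  have key : ∀ (Z W : Matrix d d ℂ), Z.IsHermitian →
      Matrix.trace (Z * W)
        = ∑ p : d × d, (starRingEnd ℂ) (Z p.1 p.2) * W p.1 p.2 := by
    intro Z W hZ
    rw [Fintype.sum_prod_type]
    rw [Matrix.trace, Finset.sum_comm]
    simp only [Matrix.diag, Matrix.mul_apply]
    refine Finset.sum_congr rfl fun i _ => Finset.sum_congr rfl fun j _ => ?_
    have h : (starRingEnd ℂ) (Z j i) = Z i j := by
      conv_rhs => rw [← hZ]
      simp [Matrix.conjTranspose_apply]
    rw [h]
  have hxy : Matrix.trace (X * Y) = ⟪x, y⟫_ℂ := by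
    rw [key X Y hX]; simp [PiLp.inner_apply, RCLike.inner_apply, hx, hy, mul_comm]
  have hxx : Matrix.trace (X * X) = ⟪x, x⟫_ℂ := by
    rw [key X X hX]; simp [PiLp.inner_apply, RCLike.inner_apply, hx, mul_comm, -inner_self_eq_norm_sq_to_K]
  have hyy : Matrix.trace (Y * Y) = ⟪y, y⟫_ℂ := by
    rw [key Y Y hY]; simp [PiLp.inner_apply, RCLike.inner_apply, hy, mul_comm, -inner_self_eq_norm_sq_to_K]
  rw [hxy, hxx, hyy]
  have hxx' : (⟪x, x⟫_ℂ).re = ‖x‖ ^ 2 := by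
    have := @inner_self_eq_norm_sq ℂ _ _ _ _ x
    simpa using this
  have hyy' : (⟪y, y⟫_ℂ).re = ‖y‖ ^ 2 := by
    have := @inner_self_eq_norm_sq ℂ _ _ _ _ y
    simpa using this
  rw [hxx', hyy']
  have h1 : (⟪x, y⟫_ℂ).re ≤ ‖⟪x, y⟫_ℂ‖ := Complex.re_le_norm _
  have h2 : ‖⟪x, y⟫_ℂ‖ ≤ ‖x‖ * ‖y‖ := norm_inner_le_norm x y
  have h3 : Real.sqrt (‖x‖ ^ 2 * ‖y‖ ^ 2) = ‖x‖ * ‖y‖ := by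
    rw [← mul_pow, Real.sqrt_sq (by positivity)]
  rw [h3]; exact h1.trans h2

/-- For every density matrix `ρ` (with positive-semidefinite square
root `s = √ρ`) and all Hermitian matrices `H` and `V`, the instantaneous charging
power `P = tr(iH[ρ,V])` is a real number which satisfies the identity
`tr(iH[ρ,V]) = tr(i[H,√ρ]{√ρ,V})` and the Cauchy–Schwarz-type bound
`tr(iH[ρ,V]) ≤ √((−tr([H,√ρ]²)) · tr({√ρ,V}²))`. -/
theorem power_identity_and_cauchy_schwarz_bound
    {d : Type*} [Fintype d] [DecidableEq d]
    (ρ : Matrix d d ℂ) (hρ : ρ.PosSemidef) (hτ : ρ.trace = 1)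
    (s : Matrix d d ℂ) (hs : s.PosSemidef) (hss : s * s = ρ)
    (H V : Matrix d d ℂ) (hH : H.IsHermitian) (hV : V.IsHermitian) :
    Matrix.trace (Complex.I • (H * mComm ρ V))
      = Matrix.trace (Complex.I • (mComm H s * mAComm s V)) ∧
    (Matrix.trace (Complex.I • (H * mComm ρ V))).im = 0 ∧
    (Matrix.trace (Complex.I • (H * mComm ρ V))).re
      ≤ Real.sqrt ((-(Matrix.trace (mComm H s * mComm H s))).re
          * (Matrix.trace (mAComm s V * mAComm s V)).re) := by
  have hsH : s.IsHermitian := hs.1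
  set A := mComm H s with hA
  set B := mAComm s V with hB
  set X := Complex.I • A with hXdef
  -- Hermiticity of X and B
  have hAanti : Aᴴ = -A := by
    simp [hA, mComm, Matrix.conjTranspose_sub, Matrix.conjTranspose_mul, hH.eq, hsH.eq]
  have hX : X.IsHermitian := by
    unfold Matrix.IsHermitian
    rw [hXdef, Matrix.conjTranspose_smul, hAanti]
    simp [Complex.star_def, Complex.conj_I, smul_neg]
  have hBH : B.IsHermitian := by
    unfold Matrix.IsHermitian
    simp [hB, mAComm, Matrix.conjTranspose_add, Matrix.conjTranspose_mul, hsH.eq, hV.eq, add_comm]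
  -- the trace identity
  have e1 : Matrix.trace (s * (H * (s * V))) = Matrix.trace (H * (s * (V * s))) := by
    rw [Matrix.trace_mul_comm]
    simp [Matrix.mul_assoc]
  have e2 : Matrix.trace (s * (H * (V * s))) = Matrix.trace (H * (V * (s * s))) := by
    rw [Matrix.trace_mul_comm]
    simp [Matrix.mul_assoc]
  have key : Matrix.trace (H * mComm ρ V) = Matrix.trace (A * B) := by
    rw [← hss]
    simp only [hA, hB, mComm, mAComm, mul_sub, sub_mul, mul_add, add_mul,
      Matrix.trace_sub, Matrix.trace_add, Matrix.mul_assoc]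
    rw [e1, e2]
    ring
  have identity : Matrix.trace (Complex.I • (H * mComm ρ V))
      = Matrix.trace (Complex.I • (mComm H s * mAComm s V)) := by
    rw [Matrix.trace_smul, Matrix.trace_smul, key]
  refine ⟨identity, ?_, ?_⟩
  · -- real part
    have hXB : Matrix.trace (Complex.I • (A * B)) = Matrix.trace (X * B) := by
      rw [hXdef, Matrix.smul_mul]
    have hstar : star (Matrix.trace (X * B)) = Matrix.trace (X * B) := by
      rw [← Matrix.trace_conjTranspose, Matrix.conjTranspose_mul, hBH.eq, hX.eq,
        Matrix.trace_mul_comm]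
    rw [identity, ← hA, ← hB, hXB]
    have := (Complex.conj_eq_iff_im).mp hstar
    exact this
  · -- Cauchy-Schwarz bound
    have hXB : Matrix.trace (Complex.I • (A * B)) = Matrix.trace (X * B) := by
      rw [hXdef, Matrix.smul_mul]
    have hXX : Matrix.trace (X * X) = -(Matrix.trace (A * A)) := by
      rw [hXdef, Matrix.smul_mul, Matrix.mul_smul, smul_smul, Complex.I_mul_I,
        Matrix.trace_smul]
      simp
    have hCS := herm_trace_CS X B hX hBH
    rw [identity, ← hA, ← hB, hXB]
    calc (Matrix.trace (X * B)).re
        ≤ Real.sqrt ((Matrix.trace (X * X)).re * (Matrix.trace (B * B)).re) := hCS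
      _ = Real.sqrt ((-(Matrix.trace (A * A))).re * (Matrix.trace (B * B)).re) := by
          rw [hXX]
end
end

section
/- For every density matrix ρ and every Hermitian n×n matrix V one has the sandwich inequality (tr(ρV))² ≤ tr(√ρ V √ρ V) ≤ tr(ρ V²). -/
open Matrix BigOperators
open scoped ComplexOrder

noncomputable section

lemma my_trace_nonneg {d : Type*} [Fintype d] [DecidableEq d] {M : Matrix d d ℂ}
    (hM : M.PosSemidef) : 0 ≤ M.trace := by
  rw [Matrix.trace]
  apply Finset.sum_nonneg
  intro i _
  exact hM.diag_nonneg

lemma star_eq_self_im_zero {z : ℂ} (h : star z = z) : z.im = 0 := by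
  have := congrArg Complex.im h
  simp only [Complex.star_def, Complex.conj_im] at this
  linarith

/-- For every density matrix `ρ` (with positive-semidefinite square
root `s = √ρ`) and every Hermitian matrix `V`, one has the sandwich inequality
`(tr(ρV))² ≤ tr(√ρ V √ρ V) ≤ tr(ρ V²)` (all three quantities being real). -/
theorem sandwich_inequality
    {d : Type*} [Fintype d] [DecidableEq d]
    (ρ : Matrix d d ℂ) (hρ : ρ.PosSemidef) (hτ : ρ.trace = 1)
    (s : Matrix d d ℂ) (hs : s.PosSemidef) (hss : s * s = ρ)
    (V : Matrix d d ℂ) (hV : V.IsHermitian) :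
    (Matrix.trace (ρ * V)).im = 0 ∧
    (Matrix.trace (s * V * s * V)).im = 0 ∧
    (Matrix.trace (ρ * V * V)).im = 0 ∧
    (Matrix.trace (ρ * V)).re ^ 2 ≤ (Matrix.trace (s * V * s * V)).re ∧
    (Matrix.trace (s * V * s * V)).re ≤ (Matrix.trace (ρ * V * V)).re := by
  have hρH : ρᴴ = ρ := hρ.isHermitian
  have hsH : sᴴ = s := hs.isHermitian
  have hVH : Vᴴ = V := hV
  set t : Matrix d d ℂ := (open scoped MatrixOrder in CFC.sqrt s) with ht_def
  have ht : t.PosSemidef := by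
    open scoped MatrixOrder in exact Matrix.nonneg_iff_posSemidef.mp (CFC.sqrt_nonneg s)
  have htH : tᴴ = t := ht.isHermitian
  have htt : t * t = s := by
    open scoped MatrixOrder in exact CFC.sqrt_mul_sqrt_self s (Matrix.nonneg_iff_posSemidef.mpr hs)
  -- realness
  have ha_im : (Matrix.trace (ρ * V)).im = 0 := by
    apply star_eq_self_im_zero
    rw [← trace_conjTranspose, conjTranspose_mul, hρH, hVH, trace_mul_comm]
  have hb_im : (Matrix.trace (s * V * s * V)).im = 0 := by
    apply star_eq_self_im_zero
    rw [← trace_conjTranspose]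
    simp only [conjTranspose_mul, hsH, hVH]
    rw [show V * (s * (V * s)) = V * (s * V * s) from by noncomm_ring,
      trace_mul_comm]
  have he_im : (Matrix.trace (ρ * V * V)).im = 0 := by
    apply star_eq_self_im_zero
    rw [← trace_conjTranspose]
    simp only [conjTranspose_mul, hρH, hVH]
    rw [show V * (V * ρ) = V * V * ρ from by noncomm_ring, Matrix.trace_mul_cycle]
  refine ⟨ha_im, hb_im, he_im, ?_, ?_⟩
  · -- first inequality, via L = t*V*t - c • s
    set c : ℝ := (Matrix.trace (ρ * V)).re with hc_def
    have ha_eq : Matrix.trace (ρ * V) = (c : ℂ) := by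
      apply Complex.ext <;> simp [ha_im, hc_def]
    set L : Matrix d d ℂ := t * V * t - (c : ℂ) • s with hL_def
    have hLH : Lᴴ = L := by
      simp only [hL_def, conjTranspose_sub, conjTranspose_smul, conjTranspose_mul,
        htH, hVH, hsH, Complex.star_def, Complex.conj_ofReal]
      rw [show t * (V * t) = t * V * t from by noncomm_ring]
    have hts : t * s * t = ρ := by
      rw [← hss, ← htt]; noncomm_ring
    have hTT : Matrix.trace ((t * V * t) * (t * V * t)) = Matrix.trace (s * V * s * V) := by
      rw [show (t * V * t) * (t * V * t) = t * (V * (s * (V * t))) from by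
        rw [← htt]; noncomm_ring, trace_mul_comm,
        show V * (s * (V * t)) * t = V * (s * V * s) from by
          rw [← htt]; noncomm_ring, trace_mul_comm]
    have hTs : Matrix.trace ((t * V * t) * s) = Matrix.trace (ρ * V) := by
      rw [show (t * V * t) * s = t * (V * (t * s)) from by noncomm_ring,
        trace_mul_comm,
        show V * (t * s) * t = V * ρ from by rw [← hts]; noncomm_ring,
        trace_mul_comm]
    have hsT : Matrix.trace (s * (t * V * t)) = Matrix.trace (ρ * V) := by
      rw [trace_mul_comm, hTs]
    have hsss : Matrix.trace (s * s) = 1 := by rw [hss, hτ]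
    have key : Matrix.trace (Lᴴ * L) = Matrix.trace (s * V * s * V) - (c : ℂ) ^ 2 := by
      rw [hLH]
      simp only [hL_def, Matrix.sub_mul, Matrix.mul_sub, smul_mul_assoc,
        mul_smul_comm, smul_smul, Matrix.trace_sub, Matrix.trace_smul,
        smul_eq_mul]
      rw [hTT, hTs, hsT, hsss, ha_eq]
      ring
    have hpos : (0 : ℂ) ≤ Matrix.trace (Lᴴ * L) :=
      my_trace_nonneg (Matrix.posSemidef_conjTranspose_mul_self L)
    rw [key, Complex.le_def] at hpos
    have := hpos.1
    simp only [Complex.zero_re, Complex.sub_re, Complex.zero_im] at this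
    have h2 : ((c : ℂ) ^ 2).re = c ^ 2 := by
      norm_cast
    rw [h2] at this
    linarith
  · -- second inequality, via K = s*V - V*s
    set K : Matrix d d ℂ := s * V - V * s with hK_def
    have hKH : Kᴴ = V * s - s * V := by
      simp only [hK_def, conjTranspose_sub, conjTranspose_mul, hsH, hVH]
    have key : Matrix.trace (Kᴴ * K) =
        2 * Matrix.trace (ρ * V * V) - 2 * Matrix.trace (s * V * s * V) := by
      rw [hKH]
      simp only [hK_def, Matrix.sub_mul, Matrix.mul_sub, Matrix.trace_sub]
      rw [show V * s * (s * V) = V * (ρ * V) from by rw [← hss]; noncomm_ring,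
        trace_mul_comm (V) (ρ * V),
        show V * s * (V * s) = V * (s * (V * s)) from by noncomm_ring,
        trace_mul_comm (V) (s * (V * s)),
        show s * (V * s) * V = s * V * s * V from by noncomm_ring,
        show s * V * (s * V) = s * V * s * V from by noncomm_ring,
        show s * V * (V * s) = s * (V * V * s) from by noncomm_ring,
        trace_mul_comm (s) (V * V * s),
        show V * V * s * s = V * V * ρ from by rw [← hss]; noncomm_ring,
        show Matrix.trace (V * V * ρ) = Matrix.trace (ρ * V * V) from by
          rw [Matrix.trace_mul_cycle]]
      ring
    have hpos : (0 : ℂ) ≤ Matrix.trace (Kᴴ * K) :=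
      my_trace_nonneg (Matrix.posSemidef_conjTranspose_mul_self K)
    rw [key, Complex.le_def] at hpos
    have := hpos.1
    simp only [Complex.zero_re, Complex.sub_re, Complex.mul_re, Complex.re_ofNat,
      Complex.im_ofNat, hb_im, he_im] at this
    linarith
end
end

section
/- For every density matrix ρ and every Hermitian n×n matrix V, writing W = V − tr(ρV)·I, one has 2 Var_ρ(V) ≤ tr({√ρ, W}²) ≤ 4 Var_ρ(V); moreover, if ρ is pure (ρ = |ψ⟩⟨ψ| for a unit vector ψ), then tr({√ρ, W}²) = 2 Var_ρ(V). (This establishes that the coefficient κ := tr({√ρ,W}²)/(2 Var_ρ(V)) of Theorem 1 lies in the range 1 ≤ κ ≤ 2, with κ = 1 for pure states.) -/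
open Matrix BigOperators
open scoped ComplexOrder

noncomputable section

/-- Variance `Var_ρ(V) = tr(ρV²) − (tr(ρV))²` (a real number). -/
def varMat {d : Type*} [Fintype d] (ρ V : Matrix d d ℂ) : ℝ :=
  (Matrix.trace (ρ * V * V)).re - (Matrix.trace (ρ * V)).re ^ 2

lemma trace_star_mul_self_re_nonneg {d : Type*} [Fintype d] (X : Matrix d d ℂ) :
    0 ≤ (Matrix.trace (Xᴴ * X)).re := by
  rw [Matrix.trace]
  simp only [Matrix.diag_apply, Matrix.mul_apply, Matrix.conjTranspose_apply]
  rw [Complex.re_sum]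
  refine Finset.sum_nonneg fun j _ => ?_
  rw [Complex.re_sum]
  refine Finset.sum_nonneg fun i _ => ?_
  rw [Complex.star_def, ← Complex.normSq_eq_conj_mul_self, Complex.ofReal_re]
  exact Complex.normSq_nonneg _

/-- re tr(A²) ≤ re tr(AᴴA) -/
lemma re_trace_sq_le {d : Type*} [Fintype d] (A : Matrix d d ℂ) :
    (Matrix.trace (A * A)).re ≤ (Matrix.trace (Aᴴ * A)).re := by
  have h := trace_star_mul_self_re_nonneg (A - Aᴴ)
  have hexp : (A - Aᴴ)ᴴ * (A - Aᴴ) = Aᴴ * A + A * Aᴴ - A * A - Aᴴ * Aᴴ := by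
    simp only [Matrix.conjTranspose_sub, Matrix.conjTranspose_conjTranspose]
    noncomm_ring
  rw [hexp] at h
  have hAA : Matrix.trace (Aᴴ * Aᴴ) = star (Matrix.trace (A * A)) := by
    rw [← Matrix.conjTranspose_mul, Matrix.trace_conjTranspose]
  have hA2 : Matrix.trace (A * Aᴴ) = Matrix.trace (Aᴴ * A) := Matrix.trace_mul_comm _ _
  simp only [Matrix.trace_sub, Matrix.trace_add, hAA, hA2, Complex.sub_re, Complex.add_re,
    Complex.conj_re, RCLike.star_def] at h
  linarith

/-- For every density matrix `ρ` (with positive-semidefinite square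
root `s = √ρ`) and every Hermitian matrix `V`, writing `W = V − tr(ρV)·I`, one has
`2 Var_ρ(V) ≤ tr({√ρ, W}²) ≤ 4 Var_ρ(V)`; moreover, if `ρ` is pure
(`ρ = |ψ⟩⟨ψ|` for a unit vector `ψ`), then `tr({√ρ, W}²) = 2 Var_ρ(V)`.
(Hence the coefficient `κ := tr({√ρ,W}²)/(2 Var_ρ(V))` lies in the range
`1 ≤ κ ≤ 2`, with `κ = 1` for pure states.) -/
theorem kappa_bounds
    {d : Type*} [Fintype d] [DecidableEq d]
    (ρ : Matrix d d ℂ) (hρ : ρ.PosSemidef) (hτ : ρ.trace = 1)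
    (s : Matrix d d ℂ) (hs : s.PosSemidef) (hss : s * s = ρ)
    (V : Matrix d d ℂ) (hV : V.IsHermitian)
    (W : Matrix d d ℂ)
    (hW : W = V - Matrix.trace (ρ * V) • (1 : Matrix d d ℂ)) :
    2 * varMat ρ V ≤ (Matrix.trace (mAComm s W * mAComm s W)).re ∧
    (Matrix.trace (mAComm s W * mAComm s W)).re ≤ 4 * varMat ρ V ∧
    (∀ ψ : d → ℂ, star ψ ⬝ᵥ ψ = 1 → ρ = vecMulVec ψ (star ψ) →
      (Matrix.trace (mAComm s W * mAComm s W)).re = 2 * varMat ρ V) := by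
  set t := Matrix.trace (ρ * V) with ht
  have hsH : sᴴ = s := hs.isHermitian
  have hρH : ρᴴ = ρ := hρ.isHermitian
  have htreal : star t = t := by
    rw [ht, ← Matrix.trace_conjTranspose, Matrix.conjTranspose_mul, hV, hρH,
      Matrix.trace_mul_comm]
  have hWH : Wᴴ = W := by
    rw [hW]
    simp [Matrix.conjTranspose_smul, hV.eq, htreal]
  have htρW : Matrix.trace (ρ * W) = 0 := by
    rw [hW, Matrix.mul_sub, Matrix.mul_smul, Matrix.mul_one, Matrix.trace_sub,
      Matrix.trace_smul, hτ]
    simp [← ht]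
  have hρW2 : Matrix.trace (ρ * W * W) = Matrix.trace (ρ * V * V) - t ^ 2 := by
    have h0 : ρ * W * W = ρ * V * V - t • (ρ * V) - t • (ρ * W) := by
      rw [hW]
      simp only [Matrix.mul_sub, Matrix.sub_mul, Matrix.mul_smul, Matrix.smul_mul,
        Matrix.mul_one, Matrix.one_mul, smul_sub]
    rw [h0, Matrix.trace_sub, Matrix.trace_sub, Matrix.trace_smul, Matrix.trace_smul,
      htρW, ← ht, smul_zero, smul_eq_mul]
    ring
  have hvar : (Matrix.trace (ρ * W * W)).re = varMat ρ V := by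
    rw [hρW2, varMat]
    have him : t.im = 0 := by
      have := congrArg Complex.im htreal
      simp at this; linarith [this]
    have h2 : (t ^ 2).re = t.re ^ 2 := by
      simp [pow_two, Complex.mul_re, him]
    simp [Complex.sub_re, h2, ← ht]
  have hexp : Matrix.trace (mAComm s W * mAComm s W)
      = 2 * Matrix.trace (s * W * (s * W)) + 2 * Matrix.trace (ρ * W * W) := by
    have h1 : mAComm s W * mAComm s W
        = s * W * (s * W) + (s * W) * (W * s) + W * (s * s) * W + W * s * (W * s) := by
      rw [mAComm]; noncomm_ring
    rw [h1, Matrix.trace_add, Matrix.trace_add, Matrix.trace_add, hss]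
    have c1 : Matrix.trace (W * s * (W * s)) = Matrix.trace (s * W * (s * W)) := by
      rw [show W * s * (W * s) = (W * s * W) * s from by noncomm_ring,
        Matrix.trace_mul_comm, show s * (W * s * W) = s * W * (s * W) from by noncomm_ring]
    have c2 : Matrix.trace (s * W * (W * s)) = Matrix.trace (ρ * W * W) := by
      rw [show s * W * (W * s) = (s * W * W) * s from by noncomm_ring,
        Matrix.trace_mul_comm, show s * (s * W * W) = (s * s) * W * W from by noncomm_ring,
        hss]
    have c3 : Matrix.trace (W * ρ * W) = Matrix.trace (ρ * W * W) := by
      rw [show W * ρ * W = (W * ρ) * W from rfl, Matrix.trace_mul_comm,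
        show W * (W * ρ) = (W * W) * ρ from by noncomm_ring, Matrix.trace_mul_comm,
        show ρ * (W * W) = ρ * W * W from by noncomm_ring]
    rw [c1, c2, c3]; ring
  have hcross_le : (Matrix.trace (s * W * (s * W))).re ≤ (Matrix.trace (ρ * W * W)).re := by
    have h := re_trace_sq_le (s * W)
    have hconjA : (s * W)ᴴ = W * s := by rw [Matrix.conjTranspose_mul, hsH, hWH]
    rw [hconjA] at h
    have heq : Matrix.trace (W * s * (s * W)) = Matrix.trace (ρ * W * W) := by
      rw [show W * s * (s * W) = W * ρ * W from by rw [← hss]; noncomm_ring,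
        show W * ρ * W = (W * ρ) * W from rfl, Matrix.trace_mul_comm,
        show W * (W * ρ) = (W * W) * ρ from by noncomm_ring, Matrix.trace_mul_comm,
        show ρ * (W * W) = ρ * W * W from by noncomm_ring]
    rwa [heq] at h
  have hcross_ge : 0 ≤ (Matrix.trace (s * W * (s * W))).re := by
    obtain ⟨r, hrH, hrr⟩ : ∃ r : Matrix d d ℂ, rᴴ = r ∧ r * r = s :=
      by open scoped MatrixOrder in
        exact ⟨CFC.sqrt s, (Matrix.nonneg_iff_posSemidef.mp (CFC.sqrt_nonneg s)).isHermitian,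
          CFC.sqrt_mul_sqrt_self s hs.nonneg⟩
    have hX : (r * W * r)ᴴ = r * W * r := by
      simp [Matrix.conjTranspose_mul, hrH, hWH, Matrix.mul_assoc]
    have key : Matrix.trace (s * W * (s * W)) = Matrix.trace ((r*W*r)ᴴ * (r*W*r)) := by
      rw [hX, ← hrr,
        show r * r * W * (r * r * W) = r * (r * W * (r * r * W)) from by noncomm_ring,
        Matrix.trace_mul_comm,
        show r * W * (r * r * W) * r = (r * W * r) * (r * W * r) from by noncomm_ring]
    rw [key]
    exact trace_star_mul_self_re_nonneg _
  refine ⟨?_, ?_, ?_⟩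
  · rw [hexp]
    simp only [Complex.add_re, Complex.mul_re, Complex.re_ofNat, Complex.im_ofNat,
      zero_mul, sub_zero]
    linarith [hcross_ge, hvar.ge, hvar.le]
  · rw [hexp]
    simp only [Complex.add_re, Complex.mul_re, Complex.re_ofNat, Complex.im_ofNat,
      zero_mul, sub_zero]
    linarith [hcross_le, hvar.ge, hvar.le]
  · intro ψ hψ hρψ
    have hidem : ρ * ρ = ρ := by
      rw [hρψ]
      ext i j
      simp only [Matrix.mul_apply, Matrix.vecMulVec_apply]
      have h1 : ∀ k, ψ i * (star ψ) k * (ψ k * (star ψ) j)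
          = ((star ψ) k * ψ k) * (ψ i * (star ψ) j) := fun k => by ring
      simp_rw [h1, ← Finset.sum_mul]
      have h2 : ∑ k, (star ψ) k * ψ k = 1 := hψ
      rw [h2, one_mul]
    have hsρ : s = ρ := by
      open scoped MatrixOrder in
      refine (CFC.sqrt_unique hss hs.nonneg).symm.trans (CFC.sqrt_unique ?_ hρ.nonneg)
      exact hidem
    have hρWρ : ρ * W * ρ = 0 := by
      have hc : ρ * W * ρ = Matrix.trace (ρ * W) • ρ := by
        rw [hρψ]
        ext i j
        simp only [Matrix.mul_apply, Matrix.vecMulVec_apply, Matrix.smul_apply,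
          Matrix.trace, Matrix.diag_apply, Finset.sum_mul, Finset.mul_sum, smul_eq_mul]
        refine Finset.sum_congr rfl fun k _ => Finset.sum_congr rfl fun l _ => ?_
        ring
      rw [hc, htρW, zero_smul]
    have hcross0 : Matrix.trace (s * W * (s * W)) = 0 := by
      rw [hsρ, show ρ * W * (ρ * W) = (ρ * W * ρ) * W from by noncomm_ring,
        hρWρ, Matrix.zero_mul, Matrix.trace_zero]
    rw [hexp, hcross0]
    simp only [mul_zero, zero_add, Complex.mul_re, Complex.re_ofNat, Complex.im_ofNat,
      zero_mul, sub_zero]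
    rw [hvar]
end
end

section
/- (Theorem 1, with the coefficient κ replaced by its proven bounds.) Let ρ be a density matrix on the N-cell tensor product space ⊗_{i=1}^N ℂ^{n_i}, let H = Σ_{i=1}^N H_i where each H_i is a Hermitian n_i×n_i matrix acting on cell i and as the identity on all other cells, and let V be any Hermitian operator on the total space. Then the instantaneous charging power P = tr(iH[ρ,V]) satisfies P ≤ 2 √( Γ_C(ρ) · (Σ_{i=1}^N tr(H_i²)) · Var_ρ(V) ), where tr(H_i²) is the trace of the square of the single-cell matrix H_i; and if ρ is pure, then the sharper bound P ≤ √( 2 Γ_C(ρ) · (Σ_{i=1}^N tr(H_i²)) · Var_ρ(V) ) holds. -/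
open Matrix BigOperators
open scoped ComplexOrder

noncomputable section

/-- Commutation matrix `γ_C(ρ, M)` built from the square root `s = √ρ` of a density
matrix, with entries `γ_C(ρ,M)_{μν} = −tr([M_μ,√ρ][M_ν,√ρ])`. -/
def gammaC {d ι : Type*} [Fintype d] (s : Matrix d d ℂ) (M : ι → Matrix d d ℂ) :
    Matrix ι ι ℝ :=
  fun μ ν => (-(Matrix.trace (mComm (M μ) s * mComm (M ν) s))).re

/-- Largest eigenvalue of a (finite, real symmetric) matrix. -/
def maxEig {ι : Type*} [Fintype ι] (G : Matrix ι ι ℝ) : ℝ :=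
  sSup {c : ℝ | ∃ v : ι → ℝ, v ≠ 0 ∧ G.mulVec v = c • v}

/-- The operator on the `N`-cell space `⊗_j ℂ^{n_j}` acting as `A` on cell `i`
and as the identity on all other cells. -/
def localOp {N : ℕ} (n : Fin N → ℕ) (i : Fin N)
    (A : Matrix (Fin (n i)) (Fin (n i)) ℂ) :
    Matrix ((j : Fin N) → Fin (n j)) ((j : Fin N) → Fin (n j)) ℂ :=
  fun x y => A (x i) (y i) * ∏ j ∈ Finset.univ.erase i, (if x j = y j then 1 else 0)

/-- The local observable set built from a choice `A i α` of Hermitian bases of the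
individual cells. -/
def obsFamily {N : ℕ} (n : Fin N → ℕ)
    (A : ∀ i : Fin N, Fin (n i ^ 2) → Matrix (Fin (n i)) (Fin (n i)) ℂ) :
    ((i : Fin N) × Fin (n i ^ 2)) →
      Matrix ((j : Fin N) → Fin (n j)) ((j : Fin N) → Fin (n j)) ℂ :=
  fun μ => localOp n μ.1 (A μ.1 μ.2)

/- ------------------- auxiliary lemmas ------------------- -/

lemma traceCS {d : Type*} [Fintype d] (A B : Matrix d d ℂ) :
    ‖Matrix.trace (Aᴴ * B)‖ ≤
      Real.sqrt ((Matrix.trace (Aᴴ * A)).re) * Real.sqrt ((Matrix.trace (Bᴴ * B)).re) := by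
  classical
  let f : Matrix d d ℂ → EuclideanSpace ℂ (d × d) := fun M => WithLp.toLp 2 (fun p : d × d => M p.1 p.2)
  have hinner : ∀ M N : Matrix d d ℂ, inner ℂ (f M) (f N) = Matrix.trace (Mᴴ * N) := by
    intro M N
    rw [Matrix.trace, PiLp.inner_apply]
    simp only [PiLp.toLp_apply, RCLike.inner_apply', Matrix.diag_apply, Matrix.mul_apply,
      Matrix.conjTranspose_apply, Fintype.sum_prod_type, star]
    exact Finset.sum_comm
  have hnorm : ∀ M : Matrix d d ℂ, ‖f M‖ = Real.sqrt ((Matrix.trace (Mᴴ * M)).re) := by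
    intro M
    rw [← hinner M M, norm_eq_sqrt_re_inner (𝕜 := ℂ)]
    rfl
  calc ‖Matrix.trace (Aᴴ * B)‖ = ‖inner ℂ (f A) (f B)‖ := by
        rw [hinner]
    _ ≤ ‖f A‖ * ‖f B‖ := norm_inner_le_norm _ _
    _ = _ := by rw [hnorm, hnorm]

lemma trace_hermitian_real {d : Type*} [Fintype d] {A B : Matrix d d ℂ}
    (hA : A.IsHermitian) (hB : B.IsHermitian) :
    Matrix.trace (A * B) = ((Matrix.trace (A * B)).re : ℂ) := by
  have h : (starRingEnd ℂ) (Matrix.trace (A * B)) = Matrix.trace (A * B) := by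
    calc (starRingEnd ℂ) (Matrix.trace (A * B)) = Matrix.trace ((A * B)ᴴ) := by
          rw [Matrix.trace_conjTranspose]; rfl
      _ = Matrix.trace (Bᴴ * Aᴴ) := by rw [Matrix.conjTranspose_mul]
      _ = Matrix.trace (B * A) := by rw [hA.eq, hB.eq]
      _ = Matrix.trace (A * B) := Matrix.trace_mul_comm _ _
  exact (Complex.conj_eq_iff_re.mp h).symm

lemma trace_conj_self_re_nonneg {d : Type*} [Fintype d] (A : Matrix d d ℂ) :
    0 ≤ (Matrix.trace (Aᴴ * A)).re := by
  classical
  rw [Matrix.trace]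
  simp only [Matrix.diag_apply, Matrix.mul_apply, Matrix.conjTranspose_apply]
  rw [Complex.re_sum]
  refine Finset.sum_nonneg fun j _ => ?_
  rw [Complex.re_sum]
  refine Finset.sum_nonneg fun k _ => ?_
  have : (star (A k j) * A k j) = ((Complex.normSq (A k j) : ℂ)) := by
    rw [Complex.normSq_eq_conj_mul_self]; rfl
  rw [this]
  simp [Complex.normSq_nonneg]

lemma expand_basis {m : ℕ} (A : Fin (m ^ 2) → Matrix (Fin m) (Fin m) ℂ)
    (hAo : ∀ α β, Matrix.trace (A α * A β) = if α = β then 1 else 0)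
    (B : Matrix (Fin m) (Fin m) ℂ) :
    B = ∑ α, (Matrix.trace (B * A α)) • A α := by
  classical
  have hli : LinearIndependent ℂ A := by
    rw [Fintype.linearIndependent_iff]
    intro g hg β
    have := congrArg (fun M => Matrix.trace (M * A β)) hg
    simpa [Finset.sum_mul, Matrix.trace_sum, hAo, Matrix.smul_mul] using this
  have hcard : Fintype.card (Fin (m ^ 2)) = Module.finrank ℂ (Matrix (Fin m) (Fin m) ℂ) := by
    simp [Module.finrank_matrix, pow_two]
  have hspan : Submodule.span ℂ (Set.range A) = ⊤ :=
    hli.span_eq_top_of_card_eq_finrank' hcard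
  have hB : B ∈ Submodule.span ℂ (Set.range A) := by rw [hspan]; trivial
  obtain ⟨t, ht⟩ := (Submodule.mem_span_range_iff_exists_fun ℂ).mp hB
  have htβ : ∀ β, t β = Matrix.trace (B * A β) := by
    intro β
    conv_rhs => rw [← ht]
    simp [Finset.sum_mul, Matrix.trace_sum, hAo, Matrix.smul_mul]
  calc B = ∑ i, t i • A i := ht.symm
    _ = _ := Finset.sum_congr rfl fun β _ => by rw [htβ β]

lemma star_real_matrix {ι : Type*} [Fintype ι] (U : Matrix ι ι ℝ) : star U = Uᵀ := by
  ext i j; simp [Matrix.star_apply]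

lemma maxEig_rayleigh {ι : Type*} [Fintype ι] [DecidableEq ι] {G : Matrix ι ι ℝ}
    (hG : G.IsHermitian) (v : ι → ℝ) :
    v ⬝ᵥ G.mulVec v ≤ maxEig G * (v ⬝ᵥ v) := by
  classical
  cases isEmpty_or_nonempty ι with
  | inl h => simp [dotProduct]
  | inr h =>
    set E := {c : ℝ | ∃ w : ι → ℝ, w ≠ 0 ∧ G.mulVec w = c • w} with hE
    set U : Matrix ι ι ℝ := (hG.eigenvectorUnitary : Matrix ι ι ℝ) with hU
    have hUU : U * star U = 1 := (Matrix.mem_unitaryGroup_iff).mp hG.eigenvectorUnitary.2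
    have hUU' : star U * U = 1 := (Matrix.mem_unitaryGroup_iff').mp hG.eigenvectorUnitary.2
    have hmem : ∀ j, hG.eigenvalues j ∈ E := by
      intro j
      refine ⟨⇑(hG.eigenvectorBasis j), ?_, hG.mulVec_eigenvectorBasis j⟩
      intro h0
      exact hG.eigenvectorBasis.orthonormal.ne_zero j (by ext k; exact congrFun h0 k)
    have hsub : E ⊆ Set.range hG.eigenvalues := by
      rintro c ⟨w, hw, hGw⟩
      set u : ι → ℝ := star U *ᵥ w with hu
      have huw : U *ᵥ u = w := by
        rw [hu, Matrix.mulVec_mulVec, hUU, Matrix.one_mulVec]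
      have hune : u ≠ 0 := by
        intro h0
        apply hw; rw [← huw, h0, Matrix.mulVec_zero]
      have hdiag : (Matrix.diagonal (RCLike.ofReal ∘ hG.eigenvalues) : Matrix ι ι ℝ) *ᵥ u
          = c • u := by
        have hspec := hG.spectral_theorem
        have : G *ᵥ w = U *ᵥ ((Matrix.diagonal (RCLike.ofReal ∘ hG.eigenvalues)) *ᵥ u) := by
          conv_lhs => rw [hspec]
          rw [Unitary.conjStarAlgAut_apply, ← Matrix.mulVec_mulVec, ← Matrix.mulVec_mulVec]
        rw [hGw] at this
        have := congrArg (fun z => star U *ᵥ z) this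
        simpa [Matrix.mulVec_mulVec, hUU', Matrix.one_mulVec, Matrix.mulVec_smul, ← hu,
          ← mul_assoc] using this.symm
      obtain ⟨j, hj⟩ := Function.ne_iff.mp hune
      refine ⟨j, ?_⟩
      have := congrFun hdiag j
      simp [Matrix.mulVec_diagonal] at this
      exact this.resolve_right hj
    have hbdd : BddAbove E := (Set.finite_range hG.eigenvalues).bddAbove.mono hsub
    have hle : ∀ j, hG.eigenvalues j ≤ maxEig G := fun j => le_csSup hbdd (hmem j)
    set u : ι → ℝ := star U *ᵥ v with hu
    have hvU : v ᵥ* U = u := by rw [hu, star_real_matrix, Matrix.mulVec_transpose]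
    have hco : ((RCLike.ofReal ∘ hG.eigenvalues : ι → ℝ)) = hG.eigenvalues := rfl
    have key : v ⬝ᵥ G.mulVec v = ∑ j, hG.eigenvalues j * (u j * u j) := by
      have h1 : G.mulVec v = U *ᵥ ((Matrix.diagonal hG.eigenvalues) *ᵥ u) := by
        conv_lhs => rw [hG.spectral_theorem]
        rw [hco, Unitary.conjStarAlgAut_apply, ← Matrix.mulVec_mulVec, ← Matrix.mulVec_mulVec, hu]
      rw [h1, Matrix.dotProduct_mulVec, hvU, dotProduct]
      refine Finset.sum_congr rfl fun j _ => ?_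
      rw [Matrix.mulVec_diagonal]
      ring
    have hnorm : u ⬝ᵥ u = v ⬝ᵥ v := by
      calc u ⬝ᵥ u = u ⬝ᵥ (Uᵀ *ᵥ v) := by rw [← star_real_matrix, ← hu]
        _ = (u ᵥ* Uᵀ) ⬝ᵥ v := by rw [Matrix.dotProduct_mulVec]
        _ = (U *ᵥ u) ⬝ᵥ v := by rw [Matrix.vecMul_transpose]
        _ = v ⬝ᵥ v := by rw [hu, Matrix.mulVec_mulVec, hUU, Matrix.one_mulVec]
    rw [key, ← hnorm]
    calc ∑ j, hG.eigenvalues j * (u j * u j) ≤ ∑ j, maxEig G * (u j * u j) := by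
          refine Finset.sum_le_sum fun j _ => ?_
          exact mul_le_mul_of_nonneg_right (hle j) (mul_self_nonneg _)
      _ = maxEig G * (u ⬝ᵥ u) := by rw [dotProduct, Finset.mul_sum]

lemma stepB {d : Type*} [Fintype d] [DecidableEq d] (H s V : Matrix d d ℂ) (a : ℂ) :
    Matrix.trace (H * mComm (s * s) V)
      = Matrix.trace (mComm H s * (s * (V - a • 1) + (V - a • 1) * s)) := by
  set W := V - a • (1 : Matrix d d ℂ) with hW
  have e1 : mComm H s * (s * W + W * s)
      = H * (s * (s * W)) + H * (s * (W * s)) - s * (H * (s * W)) - s * (H * (W * s)) := by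
    simp only [mComm]; noncomm_ring
  have e2 : H * mComm (s * s) V = H * (s * (s * V)) - H * (V * (s * s)) := by
    simp only [mComm]; noncomm_ring
  rw [e1, e2]
  rw [Matrix.trace_sub, Matrix.trace_sub, Matrix.trace_sub, Matrix.trace_add]
  have c1 : Matrix.trace (s * (H * (s * W))) = Matrix.trace (H * (s * (W * s))) := by
    rw [Matrix.trace_mul_comm s (H * (s * W))]; simp [mul_assoc]
  have c2 : Matrix.trace (s * (H * (W * s))) = Matrix.trace (H * (W * (s * s))) := by
    rw [Matrix.trace_mul_comm s (H * (W * s))]; simp [mul_assoc]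
  rw [c1, c2]
  have e3 : H * (s * (s * W)) = H * (s * (s * V)) - a • (H * (s * s)) := by
    rw [hW]; noncomm_ring
  have e4 : H * (W * (s * s)) = H * (V * (s * s)) - a • (H * (s * s)) := by
    rw [hW]; noncomm_ring
  rw [e3, e4, Matrix.trace_sub, Matrix.trace_sub]
  ring

lemma localOp_smul {N : ℕ} (n : Fin N → ℕ) (i : Fin N) (z : ℂ)
    (A : Matrix (Fin (n i)) (Fin (n i)) ℂ) :
    localOp n i (z • A) = z • localOp n i A := by
  funext x y
  simp [localOp, mul_assoc]

lemma localOp_sum {N : ℕ} (n : Fin N → ℕ) (i : Fin N) {κ : Type*} (t : Finset κ)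
    (f : κ → Matrix (Fin (n i)) (Fin (n i)) ℂ) :
    localOp n i (∑ α ∈ t, f α) = ∑ α ∈ t, localOp n i (f α) := by
  funext x y
  simp [localOp, Matrix.sum_apply, Finset.sum_mul]

lemma localOp_isHermitian {N : ℕ} (n : Fin N → ℕ) (i : Fin N)
    {A : Matrix (Fin (n i)) (Fin (n i)) ℂ} (hA : A.IsHermitian) :
    (localOp n i A).IsHermitian := by
  refine Matrix.ext fun x y => ?_
  simp only [Matrix.conjTranspose_apply, localOp]
  rw [star_mul']
  congr 1
  · exact hA.apply (x i) (y i)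
  · have hmp := map_prod (starRingEnd ℂ) (fun j => if y j = x j then (1:ℂ) else 0)
      (Finset.univ.erase i)
    rw [show star (∏ j ∈ Finset.univ.erase i, if y j = x j then (1:ℂ) else 0)
      = (starRingEnd ℂ) (∏ j ∈ Finset.univ.erase i, if y j = x j then (1:ℂ) else 0) from rfl,
      hmp]
    refine Finset.prod_congr rfl fun j _ => ?_
    by_cases h : x j = y j <;> simp [h, Ne.symm, eq_comm]


lemma vecMulVec_mul_self {d : Type*} [Fintype d] (ψ : d → ℂ) (h : star ψ ⬝ᵥ ψ = 1) :
    (vecMulVec ψ (star ψ)) * (vecMulVec ψ (star ψ)) = vecMulVec ψ (star ψ) := by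
  classical
  ext x y
  simp only [Matrix.mul_apply, Matrix.vecMulVec_apply]
  calc ∑ k, ψ x * star ψ k * (ψ k * star ψ y)
      = (ψ x * star ψ y) * ∑ k, star ψ k * ψ k := by
        rw [Finset.mul_sum]; exact Finset.sum_congr rfl fun k _ => by simp; ring
    _ = ψ x * star ψ y := by
        rw [show ∑ k, star ψ k * ψ k = star ψ ⬝ᵥ ψ from rfl, h, mul_one]

lemma pure_sandwich {d : Type*} [Fintype d] (ψ : d → ℂ) (W : Matrix d d ℂ) :
    (vecMulVec ψ (star ψ)) * W * (vecMulVec ψ (star ψ))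
      = (Matrix.trace ((vecMulVec ψ (star ψ)) * W)) • (vecMulVec ψ (star ψ)) := by
  classical
  ext x y
  simp only [Matrix.mul_apply, Matrix.vecMulVec_apply, Matrix.smul_apply, Matrix.trace,
    Matrix.diag_apply, smul_eq_mul, Finset.sum_mul]
  refine Finset.sum_congr rfl fun v _ => ?_
  refine Finset.sum_congr rfl fun u _ => ?_
  ring

/- ------------------- the main theorem ------------------- -/

/-- **Theorem 1, with `κ` replaced by its proven bounds.**
For a density matrix `ρ` on the `N`-cell space (square root `s = √ρ`), battery
Hamiltonian `H = Σ_i H_i` (each `H_i` Hermitian on cell `i`, identity elsewhere)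
and any Hermitian driving operator `V`, the instantaneous charging power
`P = tr(iH[ρ,V])` satisfies `P ≤ 2 √(Γ_C(ρ) · (Σ_i tr(H_i²)) · Var_ρ(V))`;
and if `ρ` is pure, the sharper bound
`P ≤ √(2 Γ_C(ρ) · (Σ_i tr(H_i²)) · Var_ρ(V))` holds. -/
theorem power_bound_with_quantum_state_advantage
    {N : ℕ} {n : Fin N → ℕ}
    (ρ : Matrix ((j : Fin N) → Fin (n j)) ((j : Fin N) → Fin (n j)) ℂ)
    (hρ : ρ.PosSemidef) (hτ : ρ.trace = 1)
    (s : Matrix ((j : Fin N) → Fin (n j)) ((j : Fin N) → Fin (n j)) ℂ)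
    (hs : s.PosSemidef) (hss : s * s = ρ)
    (A : ∀ i : Fin N, Fin (n i ^ 2) → Matrix (Fin (n i)) (Fin (n i)) ℂ)
    (hAh : ∀ i α, (A i α).IsHermitian)
    (hAo : ∀ i α β, Matrix.trace (A i α * A i β) = if α = β then 1 else 0)
    (Hloc : ∀ i : Fin N, Matrix (Fin (n i)) (Fin (n i)) ℂ)
    (hHloc : ∀ i, (Hloc i).IsHermitian)
    (V : Matrix ((j : Fin N) → Fin (n j)) ((j : Fin N) → Fin (n j)) ℂ)
    (hV : V.IsHermitian) :
    (Matrix.trace (Complex.I • ((∑ i, localOp n i (Hloc i)) * mComm ρ V))).re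
      ≤ 2 * Real.sqrt (maxEig (gammaC s (obsFamily n A))
          * (∑ i, (Matrix.trace (Hloc i * Hloc i)).re) * varMat ρ V) ∧
    (∀ ψ : ((j : Fin N) → Fin (n j)) → ℂ, star ψ ⬝ᵥ ψ = 1 →
      ρ = vecMulVec ψ (star ψ) →
      (Matrix.trace (Complex.I • ((∑ i, localOp n i (Hloc i)) * mComm ρ V))).re
        ≤ Real.sqrt (2 * maxEig (gammaC s (obsFamily n A))
            * (∑ i, (Matrix.trace (Hloc i * Hloc i)).re) * varMat ρ V)) := by
  classical
  set Hm : Matrix ((j : Fin N) → Fin (n j)) ((j : Fin N) → Fin (n j)) ℂ :=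
    ∑ i, localOp n i (Hloc i) with hHmdef
  set a : ℂ := Matrix.trace (ρ * V) with ha
  have haR : a = ((a.re : ℝ) : ℂ) := trace_hermitian_real hρ.1 hV
  set W : Matrix ((j : Fin N) → Fin (n j)) ((j : Fin N) → Fin (n j)) ℂ := V - a • 1 with hWdef
  have hstar_a : star a = a := by rw [haR]; exact Complex.conj_ofReal _
  have hWh : W.IsHermitian := by
    have h1 : (a • (1 : Matrix ((j : Fin N) → Fin (n j)) ((j : Fin N) → Fin (n j)) ℂ)).IsHermitian := by
      unfold Matrix.IsHermitian
      rw [Matrix.conjTranspose_smul, Matrix.conjTranspose_one, hstar_a]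
    exact hV.sub h1
  have hsh : s.IsHermitian := hs.1
  have hHmh : Hm.IsHermitian := by
    unfold Matrix.IsHermitian
    rw [hHmdef, Matrix.conjTranspose_sum]
    exact Finset.sum_congr rfl fun i _ => localOp_isHermitian n i (hHloc i)
  set X := mComm Hm s with hXdef
  set Y := s * W + W * s with hYdef
  have hXh : Xᴴ = -X := by
    rw [hXdef]
    simp only [mComm, Matrix.conjTranspose_sub, Matrix.conjTranspose_mul, hHmh.eq, hsh.eq]
    rw [neg_sub]
  have hYh : Yᴴ = Y := by
    rw [hYdef]
    simp only [Matrix.conjTranspose_add, Matrix.conjTranspose_mul, hWh.eq, hsh.eq]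
    rw [add_comm]
  -- coefficients of the local Hamiltonians in the observable basis
  set c : ((i : Fin N) × Fin (n i ^ 2)) → ℝ :=
    fun μ => (Matrix.trace (Hloc μ.1 * A μ.1 μ.2)).re with hc
  have hcC : ∀ μ : ((i : Fin N) × Fin (n i ^ 2)),
      ((c μ : ℝ) : ℂ) = Matrix.trace (Hloc μ.1 * A μ.1 μ.2) := fun μ =>
    (trace_hermitian_real (hHloc μ.1) (hAh μ.1 μ.2)).symm
  have hHexp : ∀ i, Hloc i = ∑ α, ((c ⟨i, α⟩ : ℝ) : ℂ) • A i α := by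
    intro i
    calc Hloc i = ∑ α, (Matrix.trace (Hloc i * A i α)) • A i α := expand_basis (A i) (hAo i) _
      _ = _ := Finset.sum_congr rfl fun α _ => by rw [hcC ⟨i, α⟩]
  have hHm : Hm = ∑ μ : (i : Fin N) × Fin (n i ^ 2), ((c μ : ℝ) : ℂ) • obsFamily n A μ := by
    rw [hHmdef, ← Finset.univ_sigma_univ, Finset.sum_sigma]
    refine Finset.sum_congr rfl fun i _ => ?_
    conv_lhs => rw [hHexp i]
    rw [localOp_sum]
    exact Finset.sum_congr rfl fun α _ => localOp_smul n i _ _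
  set γ := gammaC s (obsFamily n A) with hγdef
  have hγh : γ.IsHermitian := by
    refine Matrix.ext fun μ ν => ?_
    show star (γ ν μ) = γ μ ν
    rw [hγdef]
    show (-(Matrix.trace (mComm (obsFamily n A ν) s * mComm (obsFamily n A μ) s))).re
      = (-(Matrix.trace (mComm (obsFamily n A μ) s * mComm (obsFamily n A ν) s))).re
    rw [Matrix.trace_mul_comm]
  set K := ∑ i, (Matrix.trace (Hloc i * Hloc i)).re with hK
  have hcK : c ⬝ᵥ c = K := by
    rw [hK, dotProduct, ← Finset.univ_sigma_univ, Finset.sum_sigma]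
    refine Finset.sum_congr rfl fun i _ => ?_
    have e : Hloc i * Hloc i = ∑ α, ((c ⟨i, α⟩ : ℝ) : ℂ) • (Hloc i * A i α) := by
      nth_rewrite 2 [hHexp i]
      rw [Finset.mul_sum]
      exact Finset.sum_congr rfl fun α _ => by rw [mul_smul_comm]
    have e2 : Matrix.trace (Hloc i * Hloc i) = ((∑ α, c ⟨i, α⟩ * c ⟨i, α⟩ : ℝ) : ℂ) := by
      rw [e, Matrix.trace_sum]
      rw [Complex.ofReal_sum]
      refine Finset.sum_congr rfl fun α _ => ?_
      rw [Matrix.trace_smul, smul_eq_mul, ← hcC ⟨i, α⟩]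
      push_cast
      ring
    rw [e2, Complex.ofReal_re]
  -- the quadratic form identity
  have hXexp : X = ∑ μ, ((c μ : ℝ) : ℂ) • mComm (obsFamily n A μ) s := by
    rw [hXdef, hHm]
    simp only [mComm, Finset.sum_mul, Finset.mul_sum, Matrix.smul_mul, Matrix.mul_smul,
      smul_sub, Finset.sum_sub_distrib]
  have hXXre : (Matrix.trace (Xᴴ * X)).re = c ⬝ᵥ γ.mulVec c := by
    have e : X * X = ∑ μ, ∑ ν, ((c μ * c ν : ℝ) : ℂ) •
        (mComm (obsFamily n A μ) s * mComm (obsFamily n A ν) s) := by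
      rw [hXexp, Finset.sum_mul_sum]
      refine Finset.sum_congr rfl fun μ _ => Finset.sum_congr rfl fun ν _ => ?_
      rw [Matrix.smul_mul, Matrix.mul_smul, smul_smul]
      push_cast
      ring_nf
    rw [hXh, Matrix.neg_mul, Matrix.trace_neg, e]
    simp only [Matrix.trace_sum, Matrix.trace_smul, smul_eq_mul, ← Finset.sum_neg_distrib,
      Complex.re_sum, dotProduct, Matrix.mulVec, Finset.mul_sum]
    refine Finset.sum_congr rfl fun μ _ => Finset.sum_congr rfl fun ν _ => ?_
    rw [← mul_neg, Complex.re_ofReal_mul, hγdef]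
    simp only [gammaC]
    ring
  -- variance pieces
  set q := (Matrix.trace (ρ * W * W)).re with hqdef
  have hqvar : q = varMat ρ V := by
    have e : ρ * W * W = ρ * V * V - (2 * a) • (ρ * V) + (a * a) • ρ := by
      rw [hWdef]
      simp only [mul_sub, sub_mul, Matrix.mul_smul, Matrix.smul_mul, mul_one, smul_smul]
      module
    rw [hqdef, e, Matrix.trace_add, Matrix.trace_sub, Matrix.trace_smul, Matrix.trace_smul,
      hτ, ← ha, smul_eq_mul, smul_eq_mul, mul_one]
    rw [varMat, ← ha]
    rw [haR]
    simp only [Complex.add_re, Complex.sub_re, Complex.ofReal_re]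
    push_cast
    simp only [Complex.add_re, Complex.sub_re, Complex.ofReal_re, Complex.mul_re,
      Complex.ofReal_im, Complex.re_ofReal_mul]
    norm_num
    ring
  have hbase : Matrix.trace (W * s * (s * W)) = Matrix.trace (ρ * W * W) := by
    rw [show W * s * (s * W) = W * (s * s * W) by noncomm_ring, Matrix.trace_mul_comm, hss]
  have hq_eq : Matrix.trace ((s * W)ᴴ * (s * W)) = Matrix.trace (ρ * W * W) := by
    rw [Matrix.conjTranspose_mul, hWh.eq, hsh.eq, hbase]
  have hq_nonneg : 0 ≤ q := by
    rw [hqdef, ← hq_eq]; exact trace_conj_self_re_nonneg _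
  have hWs_eq : Matrix.trace ((W * s)ᴴ * (W * s)) = Matrix.trace (ρ * W * W) := by
    rw [Matrix.conjTranspose_mul, hWh.eq, hsh.eq, Matrix.trace_mul_comm, hbase]
  have hsWsW_le : (Matrix.trace (s * W * s * W)).re ≤ q := by
    have e : s * W * s * W = (W * s)ᴴ * (s * W) := by
      rw [Matrix.conjTranspose_mul, hWh.eq, hsh.eq]; noncomm_ring
    calc (Matrix.trace (s * W * s * W)).re
        ≤ ‖Matrix.trace ((W * s)ᴴ * (s * W))‖ := by
          rw [← e]; exact Complex.re_le_norm _
      _ ≤ Real.sqrt ((Matrix.trace ((W * s)ᴴ * (W * s))).re)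
            * Real.sqrt ((Matrix.trace ((s * W)ᴴ * (s * W))).re) := traceCS _ _
      _ = q := by rw [hWs_eq, hq_eq, ← hqdef, Real.mul_self_sqrt hq_nonneg]
  have hYYre : (Matrix.trace (Yᴴ * Y)).re = 2 * q + 2 * (Matrix.trace (s * W * s * W)).re := by
    rw [hYh]
    have e : Y * Y = s * W * s * W + s * W * (W * s) + W * s * (s * W) + W * (s * (W * s)) := by
      rw [hYdef]; noncomm_ring
    rw [e, Matrix.trace_add, Matrix.trace_add, Matrix.trace_add, hbase]
    have e2 : Matrix.trace (s * W * (W * s)) = Matrix.trace (ρ * W * W) := by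
      rw [Matrix.trace_mul_comm, hbase]
    have e4 : Matrix.trace (W * (s * (W * s))) = Matrix.trace (s * W * s * W) := by
      rw [Matrix.trace_mul_comm]
      exact congrArg Matrix.trace (by noncomm_ring)
    rw [e2, e4, hqdef]
    simp only [Complex.add_re]
    ring
  have hyy_nonneg : 0 ≤ (Matrix.trace (Yᴴ * Y)).re := trace_conj_self_re_nonneg Y
  -- power bounded by Cauchy-Schwarz
  set t := Matrix.trace (Hm * mComm ρ V) with htdef
  have htXY : t = Matrix.trace (X * Y) := by
    rw [htdef, ← hss]
    exact stepB Hm s V a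
  have hP : (Matrix.trace (Complex.I • (Hm * mComm ρ V))).re
      ≤ Real.sqrt (c ⬝ᵥ γ.mulVec c) * Real.sqrt ((Matrix.trace (Yᴴ * Y)).re) := by
    rw [Matrix.trace_smul, smul_eq_mul, ← htdef]
    have h1 : (Complex.I * t).re = -t.im := by simp [Complex.mul_re]
    have h2 : Matrix.trace (Xᴴ * Y) = -t := by
      rw [hXh, Matrix.neg_mul, Matrix.trace_neg, ← htXY]
    calc (Complex.I * t).re = -t.im := h1
      _ ≤ ‖t‖ := (neg_le_abs _).trans (Complex.abs_im_le_norm t)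
      _ = ‖Matrix.trace (Xᴴ * Y)‖ := by rw [h2, norm_neg]
      _ ≤ Real.sqrt ((Matrix.trace (Xᴴ * X)).re) * Real.sqrt ((Matrix.trace (Yᴴ * Y)).re) :=
          traceCS X Y
      _ = _ := by rw [hXXre]
  have hcγc_nonneg : 0 ≤ c ⬝ᵥ γ.mulVec c := by
    rw [← hXXre]; exact trace_conj_self_re_nonneg X
  have hray : c ⬝ᵥ γ.mulVec c ≤ maxEig γ * K := by
    have := maxEig_rayleigh hγh c
    rwa [hcK] at this
  have hΓK_nonneg : 0 ≤ maxEig γ * K := hcγc_nonneg.trans hray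
  constructor
  · -- general bound
    have hyy4 : (Matrix.trace (Yᴴ * Y)).re ≤ 4 * q := by
      rw [hYYre]; linarith [hsWsW_le]
    calc (Matrix.trace (Complex.I • (Hm * mComm ρ V))).re
        ≤ Real.sqrt (c ⬝ᵥ γ.mulVec c) * Real.sqrt ((Matrix.trace (Yᴴ * Y)).re) := hP
      _ = Real.sqrt ((c ⬝ᵥ γ.mulVec c) * (Matrix.trace (Yᴴ * Y)).re) :=
          (Real.sqrt_mul hcγc_nonneg _).symm
      _ ≤ Real.sqrt (4 * (maxEig γ * K * q)) := by
          apply Real.sqrt_le_sqrt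
          calc (c ⬝ᵥ γ.mulVec c) * (Matrix.trace (Yᴴ * Y)).re
              ≤ (maxEig γ * K) * (4 * q) :=
                mul_le_mul hray hyy4 hyy_nonneg hΓK_nonneg
            _ = 4 * (maxEig γ * K * q) := by ring
      _ = 2 * Real.sqrt (maxEig γ * K * q) := by
          rw [Real.sqrt_mul (by norm_num : (0:ℝ) ≤ 4), show (4:ℝ) = 2 ^ 2 by norm_num,
            Real.sqrt_sq (by norm_num : (0:ℝ) ≤ 2)]
      _ = 2 * Real.sqrt (maxEig γ * K * varMat ρ V) := by rw [hqvar]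
  · -- pure-state bound
    intro ψ hψ hρψ
    have hρ2 : ρ * ρ = ρ := by
      rw [hρψ]; exact vecMulVec_mul_self ψ hψ
    have hsρ : s = ρ := by
      open scoped MatrixOrder Matrix.Norms.L2Operator in
      exact (CFC.sq_eq_sq_iff s ρ hs.nonneg hρ.nonneg).mp (by rw [pow_two, pow_two, hss, hρ2])
    have htrρW : Matrix.trace (ρ * W) = 0 := by
      have e : ρ * W = ρ * V - a • ρ := by rw [hWdef]; noncomm_ring
      rw [e, Matrix.trace_sub, Matrix.trace_smul, hτ, ← ha, smul_eq_mul, mul_one, sub_self]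
    have hsWsW0 : (Matrix.trace (s * W * s * W)).re = 0 := by
      rw [hsρ]
      have e : ρ * W * ρ * W = (Matrix.trace (ρ * W)) • (ρ * W) := by
        conv_lhs => rw [show ρ * W * ρ * W = (ρ * W * ρ) * W from rfl]
        rw [hρψ, pure_sandwich ψ W, Matrix.smul_mul, ← hρψ]
      rw [e, htrρW, zero_smul, Matrix.trace_zero]
      simp
    have hyy2 : (Matrix.trace (Yᴴ * Y)).re = 2 * q := by
      rw [hYYre, hsWsW0]; ring
    calc (Matrix.trace (Complex.I • (Hm * mComm ρ V))).re
        ≤ Real.sqrt (c ⬝ᵥ γ.mulVec c) * Real.sqrt ((Matrix.trace (Yᴴ * Y)).re) := hP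
      _ = Real.sqrt ((c ⬝ᵥ γ.mulVec c) * (Matrix.trace (Yᴴ * Y)).re) :=
          (Real.sqrt_mul hcγc_nonneg _).symm
      _ ≤ Real.sqrt (2 * maxEig γ * K * q) := by
          apply Real.sqrt_le_sqrt
          rw [hyy2]
          calc (c ⬝ᵥ γ.mulVec c) * (2 * q)
              ≤ (maxEig γ * K) * (2 * q) :=
                mul_le_mul_of_nonneg_right hray (by linarith)
            _ = 2 * maxEig γ * K * q := by ring
      _ = Real.sqrt (2 * maxEig γ * K * varMat ρ V) := by rw [hqvar]

end
end

section
/- Let ψ_A and ψ_B be pure states on multipartite Hilbert spaces H_A and H_B with local observable sets M_A and M_B, respectively. Then the commutation matrix of the product state ψ_A ⊗ ψ_B with respect to the combined observable set (each observable of M_A extended by the identity on H_B and vice versa) is the direct sum γ_C(|ψ_A⟩⟨ψ_A|, M_A) ⊕ γ_C(|ψ_B⟩⟨ψ_B|, M_B): every cross entry between an observable supported in H_A and one supported in H_B vanishes. Consequently Γ_C(ψ_A ⊗ ψ_B) = max( Γ_C(ψ_A), Γ_C(ψ_B) ). -/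
open Matrix BigOperators
open scoped ComplexOrder

noncomputable section

/-- Extension of an operator on `H_A` by the identity on `H_B`. -/
def extA {dA dB : Type*} [DecidableEq dB] (X : Matrix dA dA ℂ) :
    Matrix (dA × dB) (dA × dB) ℂ :=
  fun p q => X p.1 q.1 * (if p.2 = q.2 then 1 else 0)

/-- Extension of an operator on `H_B` by the identity on `H_A`. -/
def extB {dA dB : Type*} [DecidableEq dA] (X : Matrix dB dB ℂ) :
    Matrix (dA × dB) (dA × dB) ℂ :=
  fun p q => X p.2 q.2 * (if p.1 = q.1 then 1 else 0)

/-! ### Auxiliary lemmas -/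

/-- The set of (real) eigenvalues of a real matrix. -/
def eigSet {ι : Type*} [Fintype ι] (G : Matrix ι ι ℝ) : Set ℝ :=
  {c : ℝ | ∃ v : ι → ℝ, v ≠ 0 ∧ G.mulVec v = c • v}

lemma maxEig_eq_sSup_eigSet {ι : Type*} [Fintype ι] (G : Matrix ι ι ℝ) :
    maxEig G = sSup (eigSet G) := rfl

lemma eigSet_empty {ι : Type*} [Fintype ι] [IsEmpty ι] (G : Matrix ι ι ℝ) :
    eigSet G = ∅ := by
  ext c; simp only [eigSet, Set.mem_setOf_eq, Set.mem_empty_iff_false, iff_false]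
  rintro ⟨v, hv, -⟩
  exact hv (funext fun i => isEmptyElim i)

lemma eigSet_nonempty {ι : Type*} [Fintype ι] [DecidableEq ι] [Nonempty ι]
    (G : Matrix ι ι ℝ) (hG : G.IsHermitian) : (eigSet G).Nonempty := by
  obtain ⟨j⟩ := ‹Nonempty ι›
  refine ⟨hG.eigenvalues j, (WithLp.equiv 2 _) (hG.eigenvectorBasis j), ?_, ?_⟩
  · intro h
    have := hG.eigenvectorBasis.orthonormal.1 j
    rw [show hG.eigenvectorBasis j = 0 from (WithLp.equiv 2 _).injective h] at this
    simp at this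
  · exact hG.mulVec_eigenvectorBasis j

lemma eigSet_bddAbove {ι : Type*} [Fintype ι] (G : Matrix ι ι ℝ) :
    BddAbove (eigSet G) := by
  refine ⟨∑ i, ∑ j, |G i j|, ?_⟩
  rintro c ⟨v, hv, hev⟩
  have : Nonempty ι := by
    by_contra h
    exact hv (funext fun i => absurd ⟨i⟩ h)
  obtain ⟨i, -, hi⟩ := Finset.exists_max_image Finset.univ (fun i => |v i|)
    ⟨Classical.arbitrary ι, Finset.mem_univ _⟩
  have hvi : 0 < |v i| := by
    refine abs_pos.2 fun h0 => hv (funext fun j => ?_)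
    have := hi j (Finset.mem_univ j)
    rw [h0, abs_zero] at this
    exact abs_nonpos_iff.1 this
  have key : |c| * |v i| ≤ (∑ a, ∑ b, |G a b|) * |v i| := by
    have h1 : c * v i = ∑ j, G i j * v j := by
      have := congrFun hev i
      simp only [mulVec, dotProduct, Pi.smul_apply, smul_eq_mul] at this
      linarith [this]
    calc |c| * |v i| = |c * v i| := (abs_mul c (v i)).symm
      _ = |∑ j, G i j * v j| := by rw [h1]
      _ ≤ ∑ j, |G i j * v j| := Finset.abs_sum_le_sum_abs _ _
      _ ≤ ∑ j, |G i j| * |v i| := by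
          refine Finset.sum_le_sum fun j _ => ?_
          rw [abs_mul]
          exact mul_le_mul_of_nonneg_left (hi j (Finset.mem_univ j)) (abs_nonneg _)
      _ = (∑ j, |G i j|) * |v i| := by rw [Finset.sum_mul]
      _ ≤ (∑ a, ∑ b, |G a b|) * |v i| := by
          refine mul_le_mul_of_nonneg_right ?_ (le_of_lt hvi)
          exact Finset.single_le_sum (f := fun a => ∑ b, |G a b|)
            (fun a _ => Finset.sum_nonneg fun b _ => abs_nonneg _) (Finset.mem_univ i)
  exact le_trans (le_abs_self c) (le_of_mul_le_mul_right key hvi)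

lemma eigSet_nonneg {ι : Type*} [Fintype ι] (G : Matrix ι ι ℝ)
    (hpsd : ∀ v : ι → ℝ, 0 ≤ v ⬝ᵥ G.mulVec v) : ∀ c ∈ eigSet G, 0 ≤ c := by
  rintro c ⟨v, hv, hev⟩
  have h1 : v ⬝ᵥ G.mulVec v = c * (v ⬝ᵥ v) := by
    rw [hev]; simp [dotProduct, Finset.mul_sum, mul_comm, mul_left_comm]
  have h2 : 0 < v ⬝ᵥ v := by
    have hne : ∃ i, v i ≠ 0 := by
      by_contra h; push_neg at h; exact hv (funext h)
    obtain ⟨i, hi⟩ := hne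
    have hpos : 0 < v i * v i := mul_self_pos.2 hi
    have hle : v i * v i ≤ ∑ j, v j * v j :=
      Finset.single_le_sum (fun j _ => mul_self_nonneg (v j)) (Finset.mem_univ i)
    simpa [dotProduct] using lt_of_lt_of_le hpos hle
  nlinarith [hpsd v, h1, h2]

lemma sSup_eigSet_nonneg {ι : Type*} [Fintype ι] [DecidableEq ι] [Nonempty ι]
    (G : Matrix ι ι ℝ) (hG : G.IsHermitian) (hp : ∀ v : ι → ℝ, 0 ≤ v ⬝ᵥ G.mulVec v) :
    0 ≤ sSup (eigSet G) := by
  obtain ⟨c, hc⟩ := eigSet_nonempty G hG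
  exact le_trans (eigSet_nonneg G hp c hc) (le_csSup (eigSet_bddAbove G) hc)

lemma eigSet_fromBlocks {ι κ : Type*} [Fintype ι] [Fintype κ]
    (G : Matrix ι ι ℝ) (H : Matrix κ κ ℝ) :
    eigSet (Matrix.fromBlocks G 0 0 H) = eigSet G ∪ eigSet H := by
  ext c
  constructor
  · rintro ⟨v, hv, hev⟩
    rw [fromBlocks_mulVec] at hev
    have hA : G.mulVec (v ∘ Sum.inl) = c • (v ∘ Sum.inl) := by
      funext i
      have := congrFun hev (Sum.inl i)
      simpa using this
    have hB : H.mulVec (v ∘ Sum.inr) = c • (v ∘ Sum.inr) := by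
      funext i
      have := congrFun hev (Sum.inr i)
      simpa using this
    by_cases h : v ∘ Sum.inl = 0
    · right
      refine ⟨v ∘ Sum.inr, ?_, hB⟩
      intro h'
      apply hv; funext x
      cases x with
      | inl i => exact congrFun h i
      | inr i => exact congrFun h' i
    · exact Or.inl ⟨v ∘ Sum.inl, h, hA⟩
  · rintro (⟨v, hv, hev⟩ | ⟨v, hv, hev⟩)
    · refine ⟨Sum.elim v 0, ?_, ?_⟩
      · intro h
        apply hv; funext i; exact congrFun h (Sum.inl i)
      · funext x
        cases x with
        | inl i =>
          have := congrFun hev i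
          simp [fromBlocks_mulVec, mulVec, dotProduct] at this ⊢
          simpa [mulVec, dotProduct] using this
        | inr i => simp [fromBlocks_mulVec, mulVec, dotProduct]
    · refine ⟨Sum.elim 0 v, ?_, ?_⟩
      · intro h
        apply hv; funext i; exact congrFun h (Sum.inr i)
      · funext x
        cases x with
        | inl i => simp [fromBlocks_mulVec, mulVec, dotProduct]
        | inr i =>
          have := congrFun hev i
          simp [fromBlocks_mulVec, mulVec, dotProduct] at this ⊢
          simpa [mulVec, dotProduct] using this

lemma maxEig_fromBlocks {ι κ : Type*} [Fintype ι] [DecidableEq ι] [Fintype κ] [DecidableEq κ]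
    (G : Matrix ι ι ℝ) (H : Matrix κ κ ℝ) (hG : G.IsHermitian) (hH : H.IsHermitian)
    (hGp : ∀ v : ι → ℝ, 0 ≤ v ⬝ᵥ G.mulVec v) (hHp : ∀ v : κ → ℝ, 0 ≤ v ⬝ᵥ H.mulVec v) :
    maxEig (Matrix.fromBlocks G 0 0 H) = max (maxEig G) (maxEig H) := by
  rw [maxEig_eq_sSup_eigSet, maxEig_eq_sSup_eigSet, maxEig_eq_sSup_eigSet,
    eigSet_fromBlocks]
  rcases isEmpty_or_nonempty ι with hι | hι <;> rcases isEmpty_or_nonempty κ with hκ | hκ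
  · simp [eigSet_empty, Real.sSup_empty]
  · rw [eigSet_empty G, Set.empty_union, Real.sSup_empty]
    exact (max_eq_right (sSup_eigSet_nonneg H hH hHp)).symm
  · rw [eigSet_empty H, Set.union_empty, Real.sSup_empty]
    exact (max_eq_left (sSup_eigSet_nonneg G hG hGp)).symm
  · exact csSup_union (eigSet_bddAbove G) (eigSet_nonempty G hG)
      (eigSet_bddAbove H) (eigSet_nonempty H hH)

/-! ### Expectation values and the key trace identity -/

def expVal {d : Type*} [Fintype d] (ψ : d → ℂ) (X : Matrix d d ℂ) : ℂ :=
  star ψ ⬝ᵥ X.mulVec ψ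

lemma trace_mul_rho {d : Type*} [Fintype d] (ψ : d → ℂ) (X : Matrix d d ℂ) :
    Matrix.trace (X * vecMulVec ψ (star ψ)) = expVal ψ X := by
  simp only [Matrix.trace, Matrix.diag, Matrix.mul_apply, vecMulVec_apply, expVal,
    dotProduct, mulVec, Pi.star_apply]
  refine Finset.sum_congr rfl fun i _ => ?_
  rw [Finset.mul_sum]
  refine Finset.sum_congr rfl fun j _ => ?_
  ring

lemma rho_X_rho {d : Type*} [Fintype d] (ψ : d → ℂ) (X : Matrix d d ℂ) :
    vecMulVec ψ (star ψ) * X * vecMulVec ψ (star ψ) = expVal ψ X • vecMulVec ψ (star ψ) := by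
  ext p q
  simp only [Matrix.mul_apply, vecMulVec_apply, Matrix.smul_apply, expVal, dotProduct, mulVec,
    Pi.star_apply, smul_eq_mul, Finset.sum_mul, Finset.mul_sum]
  rw [Finset.sum_comm]
  refine Finset.sum_congr rfl fun a _ => ?_
  refine Finset.sum_congr rfl fun b _ => ?_
  ring

lemma rho_sq {d : Type*} [Fintype d] (ψ : d → ℂ) (hψ : star ψ ⬝ᵥ ψ = 1) :
    vecMulVec ψ (star ψ) * vecMulVec ψ (star ψ) = vecMulVec ψ (star ψ) := by
  ext p q
  simp only [Matrix.mul_apply, vecMulVec_apply]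
  have h : ∑ a, ψ p * star ψ a * (ψ a * star ψ q)
      = (∑ a, star ψ a * ψ a) * (ψ p * star ψ q) := by
    rw [Finset.sum_mul]; exact Finset.sum_congr rfl fun a _ => by ring
  rw [h]
  have h1 : (∑ a, star ψ a * ψ a) = 1 := by
    simpa [dotProduct] using hψ
  rw [h1, one_mul]

lemma key_trace {d : Type*} [Fintype d] (ψ : d → ℂ) (hψ : star ψ ⬝ᵥ ψ = 1)
    (M N : Matrix d d ℂ) :
    -(Matrix.trace (mComm M (vecMulVec ψ (star ψ)) * mComm N (vecMulVec ψ (star ψ))))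
      = expVal ψ (M * N) + expVal ψ (N * M) - 2 * (expVal ψ M * expVal ψ N) := by
  set ρ := vecMulVec ψ (star ψ) with hρ
  have expand : mComm M ρ * mComm N ρ
      = M * ρ * (N * ρ) - M * ρ * (ρ * N) - ρ * M * (N * ρ) + ρ * M * (ρ * N) := by
    simp only [mComm]; noncomm_ring
  have t1 : Matrix.trace (M * ρ * (N * ρ)) = expVal ψ N * expVal ψ M := by
    have h : M * ρ * (N * ρ) = M * (ρ * N * ρ) := by noncomm_ring
    rw [h, rho_X_rho, Matrix.mul_smul, Matrix.trace_smul, trace_mul_rho]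
    simp [smul_eq_mul]
  have t2 : Matrix.trace (M * ρ * (ρ * N)) = expVal ψ (N * M) := by
    have h : M * ρ * (ρ * N) = M * (ρ * ρ) * N := by noncomm_ring
    rw [h, rho_sq ψ hψ, Matrix.trace_mul_comm, ← Matrix.mul_assoc, trace_mul_rho]
  have t3 : Matrix.trace (ρ * M * (N * ρ)) = expVal ψ (M * N) := by
    have h : ρ * M * (N * ρ) = ρ * (M * N) * ρ := by noncomm_ring
    rw [h, Matrix.trace_mul_cycle, rho_sq ψ hψ, Matrix.trace_mul_comm, trace_mul_rho]
  have t4 : Matrix.trace (ρ * M * (ρ * N)) = expVal ψ M * expVal ψ N := by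
    have h : ρ * M * (ρ * N) = (ρ * M * ρ) * N := by noncomm_ring
    rw [h, rho_X_rho, Matrix.smul_mul, Matrix.trace_smul, Matrix.trace_mul_comm,
      trace_mul_rho]
    simp [smul_eq_mul]
  rw [expand, Matrix.trace_add, Matrix.trace_sub, Matrix.trace_sub, t1, t2, t3, t4]
  ring

/-! ### Product structure -/

def prodOp {dA dB : Type*} (X : Matrix dA dA ℂ) (Y : Matrix dB dB ℂ) :
    Matrix (dA × dB) (dA × dB) ℂ := fun p q => X p.1 q.1 * Y p.2 q.2

lemma extA_eq {dA dB : Type*} [DecidableEq dB] (X : Matrix dA dA ℂ) :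
    (extA X : Matrix (dA × dB) (dA × dB) ℂ) = prodOp X 1 := by
  ext p q; simp [extA, prodOp, Matrix.one_apply]

lemma extB_eq {dA dB : Type*} [DecidableEq dA] (Y : Matrix dB dB ℂ) :
    (extB Y : Matrix (dA × dB) (dA × dB) ℂ) = prodOp 1 Y := by
  ext p q; simp [extB, prodOp, Matrix.one_apply, mul_comm]

lemma prodOp_mul {dA dB : Type*} [Fintype dA] [Fintype dB]
    (X X' : Matrix dA dA ℂ) (Y Y' : Matrix dB dB ℂ) :
    prodOp X Y * prodOp X' Y' = prodOp (X * X') (Y * Y') := by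
  ext p q
  simp only [Matrix.mul_apply, prodOp, Fintype.sum_prod_type]
  rw [Finset.sum_mul_sum]
  refine Finset.sum_congr rfl fun a _ => Finset.sum_congr rfl fun b _ => ?_
  ring

lemma expVal_prodOp {dA dB : Type*} [Fintype dA] [Fintype dB]
    (ψA : dA → ℂ) (ψB : dB → ℂ) (X : Matrix dA dA ℂ) (Y : Matrix dB dB ℂ) :
    expVal (fun p : dA × dB => ψA p.1 * ψB p.2) (prodOp X Y)
      = expVal ψA X * expVal ψB Y := by
  simp only [expVal, dotProduct, mulVec, prodOp, Pi.star_apply, Fintype.sum_prod_type]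
  rw [Finset.sum_mul_sum]
  refine Finset.sum_congr rfl fun a _ => Finset.sum_congr rfl fun b _ => ?_
  rw [mul_mul_mul_comm, Finset.sum_mul_sum]
  simp only [Finset.mul_sum]
  refine Finset.sum_congr rfl fun a' _ => Finset.sum_congr rfl fun b' _ => ?_
  simp only [star_mul']
  ring

lemma expVal_one {d : Type*} [Fintype d] [DecidableEq d] (ψ : d → ℂ)
    (hψ : star ψ ⬝ᵥ ψ = 1) : expVal ψ 1 = 1 := by
  rw [expVal, Matrix.one_mulVec]
  exact hψ

lemma one_eq_prodOp {dA dB : Type*} [DecidableEq dA] [DecidableEq dB] :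
    (1 : Matrix (dA × dB) (dA × dB) ℂ) = prodOp 1 1 := by
  ext p q
  simp only [prodOp, Matrix.one_apply, Prod.ext_iff]
  by_cases h1 : p.1 = q.1 <;> by_cases h2 : p.2 = q.2 <;> simp [h1, h2]

/-! ### Hermiticity lemmas -/

lemma vecMulVec_isHermitian {d : Type*} [Fintype d] (ψ : d → ℂ) :
    (vecMulVec ψ (star ψ)).IsHermitian := by
  ext p q
  simp only [conjTranspose_apply, vecMulVec_apply, Pi.star_apply, star_mul', star_star]
  ring

lemma extA_isHermitian {dA dB : Type*} [DecidableEq dB] {X : Matrix dA dA ℂ}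
    (hX : X.IsHermitian) : (extA X : Matrix (dA × dB) (dA × dB) ℂ).IsHermitian := by
  ext p q
  simp only [conjTranspose_apply, extA, star_mul']
  have hs : star (X (q.1) (p.1)) = X p.1 q.1 := by
    conv_rhs => rw [← hX.eq]
    rw [conjTranspose_apply]
  rw [hs]
  congr 1
  simp [apply_ite (star : ℂ → ℂ), eq_comm]

lemma extB_isHermitian {dA dB : Type*} [DecidableEq dA] {Y : Matrix dB dB ℂ}
    (hY : Y.IsHermitian) : (extB Y : Matrix (dA × dB) (dA × dB) ℂ).IsHermitian := by
  ext p q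
  simp only [conjTranspose_apply, extB, star_mul']
  have hs : star (Y (q.2) (p.2)) = Y p.2 q.2 := by
    conv_rhs => rw [← hY.eq]
    rw [conjTranspose_apply]
  rw [hs]
  congr 1
  simp [apply_ite (star : ℂ → ℂ), eq_comm]

/-! ### gammaC is symmetric and positive semidefinite -/

lemma gammaC_isHermitian {d ι : Type*} [Fintype d] [Fintype ι]
    (s : Matrix d d ℂ) (M : ι → Matrix d d ℂ) : (gammaC s M).IsHermitian := by
  ext μ ν
  rw [conjTranspose_apply, star_trivial]
  simp only [gammaC]
  rw [Matrix.trace_mul_comm]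

lemma gammaC_psd {d ι : Type*} [Fintype d] [Fintype ι]
    (s : Matrix d d ℂ) (hs : s.IsHermitian)
    (M : ι → Matrix d d ℂ) (hM : ∀ μ, (M μ).IsHermitian) (v : ι → ℝ) :
    0 ≤ v ⬝ᵥ (gammaC s M).mulVec v := by
  classical
  set C : ι → Matrix d d ℂ := fun μ => mComm (M μ) s with hCdef
  have hC : ∀ μ, (C μ)ᴴ = -C μ := fun μ => by
    simp only [hCdef, mComm, conjTranspose_sub, conjTranspose_mul, (hM μ).eq, hs.eq]
    abel
  set D : Matrix d d ℂ := ∑ μ, (v μ : ℂ) • C μ with hDdef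
  have hDH : Dᴴ = ∑ ν, (v ν : ℂ) • (-(C ν)) := by
    rw [hDdef, conjTranspose_sum]
    refine Finset.sum_congr rfl fun ν _ => ?_
    rw [conjTranspose_smul, hC ν]
    simp
  have htr : Matrix.trace (D * Dᴴ)
      = ∑ μ, ∑ ν, ((v μ : ℂ) * (v ν : ℂ)) * (-(Matrix.trace (C μ * C ν))) := by
    rw [hDH, hDdef, Finset.sum_mul_sum, Matrix.trace_sum]
    refine Finset.sum_congr rfl fun μ _ => ?_
    rw [Matrix.trace_sum]
    refine Finset.sum_congr rfl fun ν _ => ?_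
    rw [smul_mul_smul_comm, Matrix.trace_smul, Matrix.mul_neg, Matrix.trace_neg]
    simp [smul_eq_mul]
  have h1 : v ⬝ᵥ (gammaC s M).mulVec v = (Matrix.trace (D * Dᴴ)).re := by
    rw [htr, Complex.re_sum]
    simp only [dotProduct, mulVec, gammaC]
    refine Finset.sum_congr rfl fun μ _ => ?_
    rw [Complex.re_sum, Finset.mul_sum]
    refine Finset.sum_congr rfl fun ν _ => ?_
    rw [← Complex.ofReal_mul, Complex.re_ofReal_mul]
    ring
  have h2 : 0 ≤ (Matrix.trace (D * Dᴴ)).re := by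
    simp only [Matrix.trace, Matrix.diag, Matrix.mul_apply, conjTranspose_apply]
    rw [Complex.re_sum]
    refine Finset.sum_nonneg fun i _ => ?_
    rw [Complex.re_sum]
    refine Finset.sum_nonneg fun j _ => ?_
    simp only [Complex.mul_re, Complex.star_def, Complex.conj_re, Complex.conj_im]
    nlinarith [sq_nonneg ((D i j).re), sq_nonneg ((D i j).im)]
  rw [h1]; exact h2

/-- For pure states `ψ_A`, `ψ_B` on multipartite spaces `H_A`, `H_B`
with local observable sets `M_A`, `M_B`, the commutation matrix of the product state
`ψ_A ⊗ ψ_B` with respect to the combined observable set (each observable of `M_A`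
extended by the identity on `H_B` and vice versa) is the direct sum
`γ_C(|ψ_A⟩⟨ψ_A|, M_A) ⊕ γ_C(|ψ_B⟩⟨ψ_B|, M_B)` — every cross entry vanishes —
and consequently `Γ_C(ψ_A ⊗ ψ_B) = max(Γ_C(ψ_A), Γ_C(ψ_B))`. -/
theorem gammaC_of_product_state
    {NA NB : ℕ} {nA : Fin NA → ℕ} {nB : Fin NB → ℕ}
    (AA : ∀ i : Fin NA, Fin (nA i ^ 2) → Matrix (Fin (nA i)) (Fin (nA i)) ℂ)
    (hAAh : ∀ i α, (AA i α).IsHermitian)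
    (hAAo : ∀ i α β, Matrix.trace (AA i α * AA i β) = if α = β then 1 else 0)
    (AB : ∀ i : Fin NB, Fin (nB i ^ 2) → Matrix (Fin (nB i)) (Fin (nB i)) ℂ)
    (hABh : ∀ i α, (AB i α).IsHermitian)
    (hABo : ∀ i α β, Matrix.trace (AB i α * AB i β) = if α = β then 1 else 0)
    (ψA : ((j : Fin NA) → Fin (nA j)) → ℂ) (hψA : star ψA ⬝ᵥ ψA = 1)
    (ψB : ((j : Fin NB) → Fin (nB j)) → ℂ) (hψB : star ψB ⬝ᵥ ψB = 1)
    (ψAB : (((j : Fin NA) → Fin (nA j)) × ((j : Fin NB) → Fin (nB j))) → ℂ)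
    (hψAB : ∀ p, ψAB p = ψA p.1 * ψB p.2) :
    gammaC (vecMulVec ψAB (star ψAB))
        (Sum.elim (fun μ => extA (obsFamily nA AA μ)) (fun ν => extB (obsFamily nB AB ν)))
      = Matrix.fromBlocks
          (gammaC (vecMulVec ψA (star ψA)) (obsFamily nA AA)) 0 0
          (gammaC (vecMulVec ψB (star ψB)) (obsFamily nB AB)) ∧
    maxEig (gammaC (vecMulVec ψAB (star ψAB))
        (Sum.elim (fun μ => extA (obsFamily nA AA μ)) (fun ν => extB (obsFamily nB AB ν))))
      = max (maxEig (gammaC (vecMulVec ψA (star ψA)) (obsFamily nA AA)))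
          (maxEig (gammaC (vecMulVec ψB (star ψB)) (obsFamily nB AB))) := by
  classical
  have hψp : ψAB = fun p => ψA p.1 * ψB p.2 := funext hψAB
  subst hψp
  have hnorm : star (fun p : ((j : Fin NA) → Fin (nA j)) × ((j : Fin NB) → Fin (nB j)) =>
      ψA p.1 * ψB p.2) ⬝ᵥ (fun p : ((j : Fin NA) → Fin (nA j)) × ((j : Fin NB) → Fin (nB j)) =>
      ψA p.1 * ψB p.2) = 1 := by
    have h : star (fun p : ((j : Fin NA) → Fin (nA j)) × ((j : Fin NB) → Fin (nB j)) =>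
        ψA p.1 * ψB p.2) ⬝ᵥ (fun p : ((j : Fin NA) → Fin (nA j)) × ((j : Fin NB) → Fin (nB j)) =>
        ψA p.1 * ψB p.2)
        = expVal (fun p : ((j : Fin NA) → Fin (nA j)) × ((j : Fin NB) → Fin (nB j)) =>
        ψA p.1 * ψB p.2) 1 := by
      rw [expVal, Matrix.one_mulVec]
    rw [h, one_eq_prodOp, expVal_prodOp, expVal_one ψA hψA, expVal_one ψB hψB, mul_one]
  have hblock : gammaC (vecMulVec (fun p => ψA p.1 * ψB p.2)
        (star fun p => ψA p.1 * ψB p.2))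
        (Sum.elim (fun μ => extA (obsFamily nA AA μ)) (fun ν => extB (obsFamily nB AB ν)))
      = Matrix.fromBlocks
          (gammaC (vecMulVec ψA (star ψA)) (obsFamily nA AA)) 0 0
          (gammaC (vecMulVec ψB (star ψB)) (obsFamily nB AB)) := by
    ext x y
    cases x with
    | inl μ =>
      cases y with
      | inl ν =>
        simp only [gammaC, Sum.elim_inl, fromBlocks_apply₁₁]
        rw [key_trace _ hnorm, key_trace ψA hψA]
        simp only [extA_eq, prodOp_mul, one_mul, mul_one, expVal_prodOp,
          expVal_one ψA hψA, expVal_one ψB hψB]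
      | inr ν =>
        simp only [gammaC, Sum.elim_inl, Sum.elim_inr, fromBlocks_apply₁₂,
          Matrix.zero_apply]
        rw [key_trace _ hnorm]
        simp only [extA_eq, extB_eq, prodOp_mul, one_mul, mul_one, expVal_prodOp,
          expVal_one ψA hψA, expVal_one ψB hψB]
        ring_nf
        simp
    | inr μ =>
      cases y with
      | inl ν =>
        simp only [gammaC, Sum.elim_inl, Sum.elim_inr, fromBlocks_apply₂₁,
          Matrix.zero_apply]
        rw [key_trace _ hnorm]
        simp only [extA_eq, extB_eq, prodOp_mul, one_mul, mul_one, expVal_prodOp,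
          expVal_one ψA hψA, expVal_one ψB hψB]
        ring_nf
        simp
      | inr ν =>
        simp only [gammaC, Sum.elim_inr, fromBlocks_apply₂₂]
        rw [key_trace _ hnorm, key_trace ψB hψB]
        simp only [extB_eq, prodOp_mul, one_mul, mul_one, expVal_prodOp,
          expVal_one ψA hψA, expVal_one ψB hψB]
  refine ⟨hblock, ?_⟩
  rw [hblock]
  exact maxEig_fromBlocks _ _
    (gammaC_isHermitian _ _) (gammaC_isHermitian _ _)
    (gammaC_psd _ (vecMulVec_isHermitian ψA) _
      (fun μ => localOp_isHermitian nA μ.1 (hAAh μ.1 μ.2)))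
    (gammaC_psd _ (vecMulVec_isHermitian ψB) _
      (fun μ => localOp_isHermitian nB μ.1 (hABh μ.1 μ.2)))

end
end

section
/- (Existence of an optimal driving Hamiltonian saturating the Cauchy–Schwarz step.) Let ρ = diag(ρ_1, …, ρ_n) be a diagonal density matrix (ρ_α ≥ 0, Σ_α ρ_α = 1) and let H be any Hermitian n×n matrix. Define the matrix V by V_{αβ} = i · (√ρ_β − √ρ_α)/(√ρ_α + √ρ_β) · H_{αβ} whenever √ρ_α + √ρ_β > 0, and V_{αβ} = 0 otherwise. Then V is Hermitian and satisfies the equality condition {√ρ, V} = i [H, √ρ]. -/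
open Matrix BigOperators
open scoped ComplexOrder

noncomputable section

/-- **existence of an optimal driving Hamiltonian saturating the
Cauchy–Schwarz step.** Let `ρ = diag(ρ_1, …, ρ_n)` be a diagonal density matrix
(`ρ_α ≥ 0`, `Σ_α ρ_α = 1`), so that `√ρ = diag(√ρ_1, …, √ρ_n)`, and let `H` be any
Hermitian matrix. Define `V` by
`V_{αβ} = i (√ρ_β − √ρ_α)/(√ρ_α + √ρ_β) H_{αβ}` whenever `√ρ_α + √ρ_β > 0`, and
`V_{αβ} = 0` otherwise. Then `V` is Hermitian and satisfies the equality condition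
`{√ρ, V} = i [H, √ρ]`. -/
theorem optimal_driving_exists
    {d : Type*} [Fintype d] [DecidableEq d]
    (r : d → ℝ) (hr : ∀ α, 0 ≤ r α) (hrsum : ∑ α, r α = 1)
    (ρ : Matrix d d ℂ) (hρ : ρ = Matrix.diagonal fun α => (r α : ℂ))
    (s : Matrix d d ℂ) (hs : s = Matrix.diagonal fun α => (Real.sqrt (r α) : ℂ))
    (H : Matrix d d ℂ) (hH : H.IsHermitian)
    (V : Matrix d d ℂ)
    (hV : ∀ α β, V α β =
      if 0 < Real.sqrt (r α) + Real.sqrt (r β) then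
        Complex.I * (((Real.sqrt (r β) : ℂ) - (Real.sqrt (r α) : ℂ))
          / ((Real.sqrt (r α) : ℂ) + (Real.sqrt (r β) : ℂ))) * H α β
      else 0) :
    V.IsHermitian ∧ mAComm s V = Complex.I • mComm H s := by
  have hHe : ∀ α β, (starRingEnd ℂ) (H β α) = H α β := fun α β => hH.apply α β
  constructor
  · ext α β
    rw [Matrix.conjTranspose_apply, hV, hV]
    have hcomm : Real.sqrt (r β) + Real.sqrt (r α) = Real.sqrt (r α) + Real.sqrt (r β) :=
      add_comm _ _
    rw [hcomm]
    by_cases h : 0 < Real.sqrt (r α) + Real.sqrt (r β)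
    · rw [if_pos h, if_pos h]
      simp only [star_mul', star_div₀, star_sub, star_add, Complex.star_def,
        Complex.conj_I, Complex.conj_ofReal, hHe]
      ring
    · simp [h]
  · ext α β
    simp only [mAComm, mComm, hs, Matrix.add_apply, Matrix.sub_apply,
      Matrix.diagonal_mul, Matrix.mul_diagonal, Matrix.smul_apply, smul_eq_mul]
    rw [hV]
    by_cases h : 0 < Real.sqrt (r α) + Real.sqrt (r β)
    · rw [if_pos h]
      have hne : ((Real.sqrt (r α) : ℂ) + (Real.sqrt (r β) : ℂ)) ≠ 0 := by
        intro hc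
        rw [← Complex.ofReal_add] at hc
        exact h.ne' (by exact_mod_cast hc)
      field_simp
    · rw [if_neg h]
      have ha : Real.sqrt (r α) = 0 := by
        have := Real.sqrt_nonneg (r α); have := Real.sqrt_nonneg (r β)
        push_neg at h; linarith
      have hb : Real.sqrt (r β) = 0 := by
        have := Real.sqrt_nonneg (r α); have := Real.sqrt_nonneg (r β)
        push_neg at h; linarith
      simp [ha, hb]
end
end
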